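/- arXiv:2002.12264 — 4 statements merged into one kernel-verified Lean document; each statement's English description precedes it below -/
import Mathlib

section
/- Let 0 < p, q < ∞ and α > 0 with α < 1/p + 1/q. Then ∫₀^{2π} (∫₀¹ |1 - r e^{iθ}|^{-αp} dr)^{q/p} dθ < ∞. -/
open MeasureTheory Complex Real

lemma aux_norm_ge_one_sub (r θ : ℝ) (hr0 : 0 ≤ r) :
    1 - r ≤ ‖(1 : ℂ) - (r : ℂ) * Complex.exp ((θ : ℂ) * Complex.I)‖ := by
  have h1 : ‖((r:ℂ) * Complex.exp ((θ:ℂ) * Complex.I))‖ = r := by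
    rw [norm_mul]
    simp [Complex.norm_exp_ofReal_mul_I, _root_.abs_of_nonneg hr0]
  calc 1 - r = ‖(1:ℂ)‖ - ‖(r:ℂ) * Complex.exp ((θ:ℂ) * Complex.I)‖ := by rw [h1]; simp
  _ ≤ _ := norm_sub_norm_le _ _

lemma aux_norm_one_sub_exp (θ : ℝ) :
    ‖(1:ℂ) - Complex.exp ((θ:ℂ) * Complex.I)‖ = 2 * |Real.sin (θ/2)| := by
  have h : (1:ℂ) - Complex.exp ((θ:ℂ) * Complex.I) = Complex.mk (1 - Real.cos θ) (-Real.sin θ) := by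
    rw [Complex.exp_mul_I]
    apply Complex.ext <;> simp [Complex.cos_ofReal_re, Complex.sin_ofReal_re]
  rw [h]
  rw [Complex.norm_def, Complex.normSq_mk]
  have e : (1 - Real.cos θ) * (1 - Real.cos θ) + -Real.sin θ * -Real.sin θ = 4 * Real.sin (θ/2)^2 := by
    have h1 := Real.sin_sq_eq_half_sub (θ/2)
    have h2 := Real.sin_sq_add_cos_sq θ
    rw [show 2*(θ/2) = θ by ring] at h1
    nlinarith
  rw [e, show (4:ℝ) * Real.sin (θ/2)^2 = (2*|Real.sin (θ/2)|)^2 by rw [mul_pow, _root_.sq_abs]; ring]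
  exact Real.sqrt_sq (by positivity)

lemma aux_norm_ge_min (r θ : ℝ) (hr0 : 0 ≤ r) (hr : r ≤ 1) (h0 : 0 ≤ θ) (h2 : θ ≤ 2*π) :
    min θ (2*π - θ) / π ≤ ‖(1 : ℂ) - (r : ℂ) * Complex.exp ((θ : ℂ) * Complex.I)‖ := by
  have hπ := Real.pi_pos
  have hsin : min θ (2*π - θ) / π ≤ Real.sin (θ/2) := by
    rcases le_total θ π with h | h
    · have hms := Real.mul_le_sin (x := θ/2) (by linarith) (by linarith)
      have hm : min θ (2*π-θ) ≤ θ := min_le_left _ _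
      have : min θ (2*π-θ)/π ≤ θ/π := by gcongr
      have he : 2/π * (θ/2) = θ/π := by field_simp
      linarith [he ▸ hms]
    · have hms := Real.mul_le_sin (x := π - θ/2) (by linarith) (by linarith)
      rw [show π - θ/2 = π - θ/2 by rfl] at hms
      have hsp : Real.sin (π - θ/2) = Real.sin (θ/2) := Real.sin_pi_sub _
      have hm : min θ (2*π-θ) ≤ 2*π-θ := min_le_right _ _
      have : min θ (2*π-θ)/π ≤ (2*π-θ)/π := by gcongr
      have he : 2/π * (π - θ/2) = (2*π-θ)/π := by field_simp
      rw [hsp, he] at hms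
      linarith
  have hsnn : 0 ≤ Real.sin (θ/2) := Real.sin_nonneg_of_nonneg_of_le_pi (by linarith) (by linarith)
  have hw : ‖(1:ℂ) - Complex.exp ((θ:ℂ) * Complex.I)‖ = 2 * Real.sin (θ/2) := by
    rw [aux_norm_one_sub_exp, _root_.abs_of_nonneg hsnn]
  by_cases hc : Real.sin (θ/2) ≤ 1 - r
  · exact le_trans (le_trans hsin hc) (aux_norm_ge_one_sub r θ hr0)
  · push_neg at hc
    set w := Complex.exp ((θ:ℂ) * Complex.I) with hwdef
    have hnw : ‖w‖ = 1 := by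
      simp [hwdef, Complex.norm_exp_ofReal_mul_I]
    have h3 : ‖(r:ℂ)*w - w‖ = 1 - r := by
      rw [show (r:ℂ)*w - w = ((r:ℝ)-1 : ℝ) * w by push_cast; ring]
      rw [norm_mul, hnw]
      rw [Complex.norm_real, Real.norm_eq_abs, abs_of_nonpos (by linarith : r - (1:ℝ) ≤ 0)]; ring
    have tri : ‖(1:ℂ) - w‖ ≤ ‖(1:ℂ) - (r:ℂ)*w‖ + ‖(r:ℂ)*w - w‖ := by
      have : (1:ℂ) - w = ((1:ℂ) - (r:ℂ)*w) + ((r:ℂ)*w - w) := by ring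
      rw [this]; exact norm_add_le _ _
    rw [hw, h3] at tri
    linarith
/-- For `0 < p, q < ∞` and `0 < α < 1/p + 1/q`,
`∫₀^{2π} (∫₀¹ |1 - r e^{iθ}|^{-αp} dr)^{q/p} dθ < ∞`. -/
theorem stmt_2 (p q α : ℝ) (hp : 0 < p) (hq : 0 < q) (hα0 : 0 < α)
    (hα : α < 1 / p + 1 / q) :
    (∫⁻ θ in Set.Ioo (0 : ℝ) (2 * Real.pi),
        (∫⁻ r in Set.Ioo (0:ℝ) 1,
            ENNReal.ofReal
              (‖(1 : ℂ) - (r : ℂ) * Complex.exp ((θ : ℂ) * Complex.I)‖ ^ (-(α * p))))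
          ^ (q / p)) < ⊤ := by
  have hπ := Real.pi_pos
  set s := α * p with hsdef
  have hs0 : 0 < s := mul_pos hα0 hp
  have hspq : s < 1 + p / q := by
    have h1 : α * p < (1/p + 1/q) * p := mul_lt_mul_of_pos_right hα hp
    have h2 : (1/p + 1/q) * p = 1 + p/q := by field_simp
    rw [h2] at h1; exact h1
  have hpq0 : 0 < p / q := div_pos hp hq
  set b := max (s - p/q) 0 with hbdef
  have hb1 : b < 1 := max_lt (by linarith) one_pos
  have hb0 : 0 ≤ b := le_max_right _ _
  set a := min s ((b+1)/2) with hadef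
  have ha0 : 0 ≤ a := le_min hs0.le (by linarith)
  have ha1 : a < 1 := lt_of_le_of_lt (min_le_right _ _) (by linarith)
  have has : a ≤ s := min_le_left _ _
  have hsa : s - a < p / q := by
    have h1 : s - p/q < a := lt_min (by linarith)
      (lt_of_le_of_lt (le_max_left (s - p/q) 0) (by linarith))
    linarith
  have hqp0 : 0 ≤ q / p := (div_pos hq hp).le
  set t := (s - a) * (q / p) with htdef
  have ht0 : 0 ≤ t := mul_nonneg (by linarith) hqp0
  have ht1 : t < 1 := by
    have h1 : (s - a) * (q/p) < (p/q) * (q/p) := mul_lt_mul_of_pos_right hsa (div_pos hq hp)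
    have h2 : (p/q) * (q/p) = 1 := by field_simp
    rw [h2] at h1; exact h1
  -- the inner constant K
  set K := ∫⁻ r in Set.Ioo (0:ℝ) 1, ENNReal.ofReal ((1 - r) ^ (-a)) with hKdef
  have hKint : IntegrableOn (fun r : ℝ => (1 - r) ^ (-a)) (Set.Ioo (0:ℝ) 1) := by
    have h1 : IntervalIntegrable (fun x : ℝ => x ^ (-a)) volume 0 1 :=
      intervalIntegral.intervalIntegrable_rpow' (by linarith)
    have h2 := (h1.comp_sub_left 1).symm
    norm_num at h2
    exact (intervalIntegrable_iff_integrableOn_Ioo_of_le (by norm_num)).mp h2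
  have hKfin : K < ⊤ := hKint.lintegral_lt_top
  have hKq : K ^ (q/p) ≠ ⊤ := (ENNReal.rpow_lt_top_of_nonneg hqp0 hKfin.ne).ne
  -- the dominating function for the outer integral
  set G : ℝ → ℝ := fun θ => π ^ t * (θ ^ (-t) + (2*π - θ) ^ (-t)) with hGdef
  have hGint : IntegrableOn G (Set.Ioo (0:ℝ) (2*π)) := by
    have h1 : IntervalIntegrable (fun x : ℝ => x ^ (-t)) volume 0 (2*π) :=
      intervalIntegral.intervalIntegrable_rpow' (by linarith)
    have i1 : IntegrableOn (fun x : ℝ => x ^ (-t)) (Set.Ioo (0:ℝ) (2*π)) :=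
      (intervalIntegrable_iff_integrableOn_Ioo_of_le (by linarith)).mp h1
    have h2 := (h1.comp_sub_left (2*π)).symm
    norm_num at h2
    have i2 : IntegrableOn (fun x : ℝ => (2*π - x) ^ (-t)) (Set.Ioo (0:ℝ) (2*π)) :=
      (intervalIntegrable_iff_integrableOn_Ioo_of_le (by linarith)).mp h2
    exact (i1.add i2).const_mul _
  have hGfin : (∫⁻ θ in Set.Ioo (0:ℝ) (2*π), ENNReal.ofReal (G θ)) < ⊤ :=
    hGint.lintegral_lt_top
  -- main estimate
  have hmono : (∫⁻ θ in Set.Ioo (0 : ℝ) (2 * π),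
        (∫⁻ r in Set.Ioo (0:ℝ) 1,
            ENNReal.ofReal
              (‖(1 : ℂ) - (r : ℂ) * Complex.exp ((θ : ℂ) * Complex.I)‖ ^ (-s)))
          ^ (q / p))
      ≤ ∫⁻ θ in Set.Ioo (0:ℝ) (2*π), ENNReal.ofReal (G θ) * K ^ (q/p) := by
    apply setLIntegral_mono
    · exact ((measurable_const.mul ((measurable_id.pow_const (-t)).add
        ((measurable_const.sub measurable_id).pow_const (-t)))).ennreal_ofReal).mul_const _
    · intro θ hθ
      obtain ⟨hθ0, hθ2⟩ := hθ
      set m := min θ (2*π - θ) with hmdef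
      have hm0 : 0 < m := lt_min hθ0 (by linarith)
      have hmπ : 0 < m / π := div_pos hm0 hπ
      -- inner integral bound
      have inner_le : (∫⁻ r in Set.Ioo (0:ℝ) 1,
            ENNReal.ofReal
              (‖(1 : ℂ) - (r : ℂ) * Complex.exp ((θ : ℂ) * Complex.I)‖ ^ (-s)))
          ≤ ENNReal.ofReal ((m/π) ^ (a - s)) * K := by
        have step : (∫⁻ r in Set.Ioo (0:ℝ) 1,
              ENNReal.ofReal
                (‖(1 : ℂ) - (r : ℂ) * Complex.exp ((θ : ℂ) * Complex.I)‖ ^ (-s)))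
            ≤ ∫⁻ r in Set.Ioo (0:ℝ) 1,
                ENNReal.ofReal ((m/π) ^ (a - s)) * ENNReal.ofReal ((1 - r) ^ (-a)) := by
          apply setLIntegral_mono
          · exact measurable_const.mul
              (((measurable_const.sub measurable_id).pow_const (-a)).ennreal_ofReal)
          · intro r hr
            obtain ⟨hr0, hr1⟩ := hr
            set x := ‖(1 : ℂ) - (r : ℂ) * Complex.exp ((θ : ℂ) * Complex.I)‖ with hxdef
            have hx1 : 1 - r ≤ x := aux_norm_ge_one_sub r θ hr0.le
            have hx2 : m / π ≤ x := aux_norm_ge_min r θ hr0.le hr1.le hθ0.le hθ2.le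
            have hx0 : 0 < x := lt_of_lt_of_le hmπ hx2
            rw [← ENNReal.ofReal_mul (by positivity)]
            apply ENNReal.ofReal_le_ofReal
            have hsplit : x ^ (-s) = x ^ (a - s) * x ^ (-a) := by
              rw [← Real.rpow_add hx0]; ring_nf
            rw [hsplit]
            apply mul_le_mul
            · exact Real.rpow_le_rpow_of_nonpos hmπ hx2 (by linarith)
            · exact Real.rpow_le_rpow_of_nonpos (by linarith) hx1 (by linarith)
            · positivity
            · positivity
        rw [lintegral_const_mul' _ _ ENNReal.ofReal_ne_top] at step
        exact step
      -- raise to power q/p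
      calc (∫⁻ r in Set.Ioo (0:ℝ) 1,
            ENNReal.ofReal
              (‖(1 : ℂ) - (r : ℂ) * Complex.exp ((θ : ℂ) * Complex.I)‖ ^ (-s)))
          ^ (q / p)
          ≤ (ENNReal.ofReal ((m/π) ^ (a - s)) * K) ^ (q/p) :=
            ENNReal.rpow_le_rpow inner_le hqp0
        _ = ENNReal.ofReal ((m/π) ^ (a - s)) ^ (q/p) * K ^ (q/p) :=
            ENNReal.mul_rpow_of_nonneg _ _ hqp0
        _ = ENNReal.ofReal (((m/π) ^ (a - s)) ^ (q/p)) * K ^ (q/p) := by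
            rw [ENNReal.ofReal_rpow_of_nonneg (by positivity) hqp0]
        _ ≤ ENNReal.ofReal (G θ) * K ^ (q/p) := by
            apply mul_le_mul_left
            apply ENNReal.ofReal_le_ofReal
            have e1 : ((m/π) ^ (a - s)) ^ (q/p) = (m/π) ^ (-t) := by
              rw [← Real.rpow_mul hmπ.le]
              congr 1
              rw [htdef]; ring
            rw [e1]
            have e2 : (m/π) ^ (-t) = π ^ t * m ^ (-t) := by
              rw [Real.div_rpow hm0.le hπ.le, Real.rpow_neg hπ.le]
              field_simp
            rw [e2, hGdef]
            have hmt : m ^ (-t) ≤ θ ^ (-t) + (2*π - θ) ^ (-t) := by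
              rcases min_choice θ (2*π - θ) with h | h
              · rw [show m = θ from h]
                nlinarith [Real.rpow_nonneg (show (0:ℝ) ≤ 2*π - θ by linarith) (-t)]
              · rw [show m = 2*π - θ from h]
                nlinarith [Real.rpow_nonneg hθ0.le (-t)]
            have hπt : (0:ℝ) ≤ π ^ t := Real.rpow_nonneg hπ.le t
            exact mul_le_mul_of_nonneg_left hmt hπt
  calc (∫⁻ θ in Set.Ioo (0 : ℝ) (2 * π),
        (∫⁻ r in Set.Ioo (0:ℝ) 1,
            ENNReal.ofReal
              (‖(1 : ℂ) - (r : ℂ) * Complex.exp ((θ : ℂ) * Complex.I)‖ ^ (-(α * p))))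
          ^ (q / p))
      ≤ ∫⁻ θ in Set.Ioo (0:ℝ) (2*π), ENNReal.ofReal (G θ) * K ^ (q/p) := hmono
    _ = (∫⁻ θ in Set.Ioo (0:ℝ) (2*π), ENNReal.ofReal (G θ)) * K ^ (q/p) :=
        lintegral_mul_const' _ _ hKq
    _ < ⊤ := ENNReal.mul_lt_top hGfin (ENNReal.rpow_lt_top_of_nonneg hqp0 hKfin.ne)
end

section
/- Let 0 < p, q < ∞ and α ≥ 1/p + 1/q. Then ∫₀^{2π} (∫₀¹ |1 - r e^{iθ}|^{-αp} dr)^{q/p} dθ = ∞. -/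
open MeasureTheory Complex Real

lemma lintA {s : ℝ} (hs : s ≤ -1) :
    ∫⁻ x in Set.Ioo (0:ℝ) 1, ENNReal.ofReal (x ^ s) = ⊤ := by
  by_contra h
  have hint : IntegrableOn (fun x : ℝ => x ^ s) (Set.Ioo (0:ℝ) 1) := by
    constructor
    · exact (Measurable.aestronglyMeasurable (by fun_prop))
    · rw [HasFiniteIntegral]
      have : ∫⁻ x in Set.Ioo (0:ℝ) 1, ‖x ^ s‖ₑ
          = ∫⁻ x in Set.Ioo (0:ℝ) 1, ENNReal.ofReal (x ^ s) := by
        refine lintegral_congr_ae ?_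
        filter_upwards [ae_restrict_mem measurableSet_Ioo] with x hx
        rw [← ofReal_norm, Real.norm_eq_abs,
          _root_.abs_of_nonneg (Real.rpow_nonneg hx.1.le s)]
      rw [this]
      exact lt_top_iff_ne_top.2 h
  rw [intervalIntegral.integrableOn_Ioo_rpow_iff one_pos] at hint
  linarith

/-- For `0 < p, q < ∞` and `α ≥ 1/p + 1/q`,
`∫₀^{2π} (∫₀¹ |1 - r e^{iθ}|^{-αp} dr)^{q/p} dθ = ∞`. -/
theorem stmt_3 (p q α : ℝ) (hp : 0 < p) (hq : 0 < q)
    (hα : 1 / p + 1 / q ≤ α) :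
    (∫⁻ θ in Set.Ioo (0 : ℝ) (2 * Real.pi),
        (∫⁻ r in Set.Ioo (0:ℝ) 1,
            ENNReal.ofReal
              (‖(1 : ℂ) - (r : ℂ) * Complex.exp ((θ : ℂ) * Complex.I)‖ ^ (-(α * p))))
          ^ (q / p)) = ⊤ := by
  have hαpos : 0 < α := lt_of_lt_of_le (by positivity) hα
  set s : ℝ := q / p - α * q with hsdef
  have hs : s ≤ -1 := by
    have h1 : (1 / p + 1 / q) * q ≤ α * q := mul_le_mul_of_nonneg_right hα hq.le
    have h2 : (1 / p + 1 / q) * q = q / p + 1 := by field_simp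
    simp only [hsdef]; linarith [h2 ▸ h1]
  rw [eq_top_iff]
  have hC : (0:ℝ) < (3:ℝ) ^ (-(α * q)) := Real.rpow_pos_of_pos (by norm_num) _
  -- pointwise bound on θ ∈ Ioo 0 1
  have key : ∀ θ ∈ Set.Ioo (0:ℝ) 1,
      ENNReal.ofReal ((3:ℝ) ^ (-(α * q)) * θ ^ s)
        ≤ (∫⁻ r in Set.Ioo (0:ℝ) 1,
            ENNReal.ofReal
              (‖(1 : ℂ) - (r : ℂ) * Complex.exp ((θ : ℂ) * Complex.I)‖ ^ (-(α * p))))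
          ^ (q / p) := by
    intro θ hθ
    obtain ⟨hθ0, hθ1⟩ := hθ
    set E : ℂ := Complex.exp ((θ : ℂ) * Complex.I) with hE
    have hEnorm : ‖E‖ = 1 := by
      rw [hE, Complex.norm_exp]
      simp
    -- inner bound
    have inner_bd : ENNReal.ofReal (((3:ℝ) * θ) ^ (-(α * p)) * θ)
        ≤ ∫⁻ r in Set.Ioo (0:ℝ) 1,
            ENNReal.ofReal (‖(1 : ℂ) - (r : ℂ) * E‖ ^ (-(α * p))) := by
      have hsub : Set.Ioo (1 - θ) 1 ⊆ Set.Ioo (0:ℝ) 1 := by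
        intro x hx; exact ⟨by linarith [hx.1], hx.2⟩
      refine le_trans ?_ (lintegral_mono_set hsub)
      have hconst : ∫⁻ _ in Set.Ioo (1 - θ) 1,
          ENNReal.ofReal (((3:ℝ) * θ) ^ (-(α * p)))
            = ENNReal.ofReal (((3:ℝ) * θ) ^ (-(α * p))) * ENNReal.ofReal θ := by
        rw [setLIntegral_const, Real.volume_Ioo]
        ring_nf
      calc ENNReal.ofReal (((3:ℝ) * θ) ^ (-(α * p)) * θ)
          = ENNReal.ofReal (((3:ℝ) * θ) ^ (-(α * p))) * ENNReal.ofReal θ :=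
            ENNReal.ofReal_mul (Real.rpow_nonneg (by positivity) _)
        _ = ∫⁻ _ in Set.Ioo (1 - θ) 1,
              ENNReal.ofReal (((3:ℝ) * θ) ^ (-(α * p))) := hconst.symm
        _ ≤ _ := by
            refine lintegral_mono_ae ?_
            filter_upwards [ae_restrict_mem measurableSet_Ioo] with r hr
            refine ENNReal.ofReal_le_ofReal ?_
            have hr0 : (0:ℝ) < r := by linarith [hr.1, hθ1]
            have hr1 : r < 1 := hr.2
            have hnormpos : (0:ℝ) < ‖(1 : ℂ) - (r : ℂ) * E‖ := by
              have : ‖(1:ℂ)‖ - ‖(r:ℂ) * E‖ ≤ ‖(1 : ℂ) - (r : ℂ) * E‖ :=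
                norm_sub_norm_le _ _
              have h2 : ‖(r:ℂ) * E‖ = r := by
                rw [norm_mul, hEnorm, mul_one, Complex.norm_real,
                  Real.norm_eq_abs, abs_of_pos hr0]
              rw [h2, norm_one] at this
              linarith
            have hub : ‖(1 : ℂ) - (r : ℂ) * E‖ ≤ 3 * θ := by
              have hdecomp : (1 : ℂ) - (r : ℂ) * E
                  = (((1:ℝ) - r : ℝ) : ℂ) + (r : ℂ) * (1 - E) := by
                push_cast; ring
              have hE1 : ‖(1:ℂ) - E‖ ≤ 2 * θ := by
                have : ‖(θ:ℂ) * Complex.I‖ ≤ 1 := by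
                  rw [norm_mul, Complex.norm_I, mul_one, Complex.norm_real,
                    Real.norm_eq_abs, abs_of_pos hθ0]
                  linarith
                have h := Complex.norm_exp_sub_one_le this
                rw [norm_mul, Complex.norm_I, mul_one, Complex.norm_real,
                  Real.norm_eq_abs, abs_of_pos hθ0] at h
                calc ‖(1:ℂ) - E‖ = ‖E - 1‖ := by
                      rw [norm_sub_rev]
                  _ ≤ 2 * θ := h
              calc ‖(1 : ℂ) - (r : ℂ) * E‖
                  ≤ ‖(((1:ℝ) - r : ℝ) : ℂ)‖ + ‖(r : ℂ) * (1 - E)‖ := by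
                    rw [hdecomp]; exact norm_add_le _ _
                _ = (1 - r) + r * ‖(1:ℂ) - E‖ := by
                    rw [norm_mul, Complex.norm_real, Complex.norm_real,
                      Real.norm_eq_abs, Real.norm_eq_abs,
                      _root_.abs_of_nonneg (by linarith : (0:ℝ) ≤ 1 - r),
                      abs_of_pos hr0]
                _ ≤ θ + 1 * (2 * θ) := by
                    have := hr.1
                    have hr2 : r * ‖(1:ℂ) - E‖ ≤ 1 * (2 * θ) :=
                      mul_le_mul hr1.le hE1 (norm_nonneg _) one_pos.le
                    linarith
                _ = 3 * θ := by ring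
            exact Real.rpow_le_rpow_of_nonpos hnormpos hub
              (by nlinarith [mul_pos hαpos hp] : -(α * p) ≤ 0)
    -- raise to power q/p
    have hqp : (0:ℝ) ≤ q / p := by positivity
    have step := ENNReal.rpow_le_rpow inner_bd hqp
    rw [ENNReal.ofReal_rpow_of_nonneg
      (by positivity : (0:ℝ) ≤ ((3:ℝ) * θ) ^ (-(α * p)) * θ) hqp] at step
    refine le_trans (le_of_eq ?_) step
    congr 1
    have h3θ : (0:ℝ) < 3 * θ := by linarith
    have hexp' : -(α * p) * (q / p) = -(α * q) := by field_simp
    rw [Real.mul_rpow (Real.rpow_nonneg h3θ.le _) hθ0.le, ← Real.rpow_mul h3θ.le,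
      hexp', Real.mul_rpow (by norm_num : (0:ℝ) ≤ 3) hθ0.le, mul_assoc,
      ← Real.rpow_add hθ0]
    congr 1
    simp only [hsdef]
    ring
  -- assemble
  calc (⊤ : ENNReal)
      = ∫⁻ θ in Set.Ioo (0:ℝ) 1, ENNReal.ofReal ((3:ℝ) ^ (-(α * q)) * θ ^ s) := by
        have : ∀ θ : ℝ, ENNReal.ofReal ((3:ℝ) ^ (-(α * q)) * θ ^ s)
            = ENNReal.ofReal ((3:ℝ) ^ (-(α * q))) * ENNReal.ofReal (θ ^ s) :=
          fun θ => ENNReal.ofReal_mul hC.le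
        simp_rw [this]
        rw [lintegral_const_mul' _ _ ENNReal.ofReal_ne_top, lintA hs,
          ENNReal.mul_top (by simp [ENNReal.ofReal_eq_zero]; linarith)]
    _ ≤ ∫⁻ θ in Set.Ioo (0:ℝ) 1,
          (∫⁻ r in Set.Ioo (0:ℝ) 1,
            ENNReal.ofReal
              (‖(1 : ℂ) - (r : ℂ) * Complex.exp ((θ : ℂ) * Complex.I)‖ ^ (-(α * p))))
          ^ (q / p) := by
        refine lintegral_mono_ae ?_
        filter_upwards [ae_restrict_mem measurableSet_Ioo] with θ hθ
        exact key θ hθ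
    _ ≤ _ := lintegral_mono_set (Set.Ioo_subset_Ioo le_rfl (by
        have := Real.pi_gt_three; linarith))
end

section
/- Let 1 ≤ p, q < ∞ and suppose RM(p₀,q₀) ⊂ RM(p,q) with a norm inequality ρ_{p,q}(f) ≤ C ρ_{p₀,q₀}(f) for all f ∈ RM(p₀,q₀) and some constant C > 0. Then p₀ ≥ p. -/
open MeasureTheory Complex Real ENNReal

/-- Radial `L^p` average `( ∫₀¹ |f(r e^{iθ})|^p dr )^{1/p}` (sup over `r` if `p = ∞`),
valued in `ℝ≥0∞`. -/
noncomputable def radialLp (p : ℝ≥0∞) (f : ℂ → ℂ) (θ : ℝ) : ℝ≥0∞ :=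
  if p = ⊤ then
    ⨆ r : Set.Ico (0 : ℝ) 1,
      ENNReal.ofReal ‖f ((r : ℝ) * Complex.exp ((θ : ℂ) * Complex.I))‖
  else
    (∫⁻ r in Set.Ioo (0:ℝ) 1,
        ENNReal.ofReal
          (‖f ((r : ℝ) * Complex.exp ((θ : ℂ) * Complex.I))‖ ^ p.toReal)) ^ (1 / p.toReal)

/-- The mixed norm `ρ_{p,q}(f)`, valued in `ℝ≥0∞`; for `q < ∞` it is
`((1/2π) ∫₀^{2π} (radial L^p average)^q dθ)^{1/q}`, and for `q = ∞` the essential/radial sup. -/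
noncomputable def rhoE (p q : ℝ≥0∞) (f : ℂ → ℂ) : ℝ≥0∞ :=
  if q = ⊤ then ⨆ θ : Set.Ico (0 : ℝ) (2 * Real.pi), radialLp p f (θ : ℝ)
  else
    ((ENNReal.ofReal (2 * Real.pi))⁻¹ *
        ∫⁻ θ in Set.Ioo (0 : ℝ) (2 * Real.pi), (radialLp p f θ) ^ q.toReal) ^ (1 / q.toReal)

lemma radial_monomial (p : ℝ) (hp : 1 ≤ p) (n : ℕ) (θ : ℝ) :
    radialLp (ENNReal.ofReal p) (fun z => z ^ n) θ
      = ENNReal.ofReal (((n : ℝ) * p + 1) ^ (-(1/p))) := by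
  have hp0 : (0:ℝ) < p := lt_of_lt_of_le one_pos hp
  set c : ℝ := (n : ℝ) * p with hcdef
  have hc : 0 ≤ c := by positivity
  have hc1 : (0:ℝ) < c + 1 := by linarith
  rw [radialLp, if_neg ENNReal.ofReal_ne_top, ENNReal.toReal_ofReal hp0.le]
  have hcong : ∀ r ∈ Set.Ioo (0:ℝ) 1,
      ENNReal.ofReal (‖((r : ℂ) * Complex.exp ((θ : ℂ) * Complex.I)) ^ n‖ ^ p)
        = ENNReal.ofReal (r ^ c) := by
    intro r hr
    have hre : ‖(r : ℂ) * Complex.exp ((θ : ℂ) * Complex.I)‖ = r := by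
      rw [norm_mul, Complex.norm_real, Real.norm_eq_abs,
        Complex.norm_exp_ofReal_mul_I, mul_one, abs_of_pos hr.1]
    rw [norm_pow, hre, ← Real.rpow_natCast r n, ← Real.rpow_mul hr.1.le, hcdef]
  rw [setLIntegral_congr_fun measurableSet_Ioo hcong]
  have hInt : IntegrableOn (fun r : ℝ => r ^ c) (Set.Ioo 0 1) := by
    have h1 : IntervalIntegrable (fun r : ℝ => r ^ c) volume 0 1 :=
      intervalIntegral.intervalIntegrable_rpow' (by linarith)
    have := (intervalIntegrable_iff_integrableOn_Ioc_of_le (zero_le_one)).mp h1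
    exact this.mono_set Set.Ioo_subset_Ioc_self
  have hval : ∫ r in Set.Ioo (0:ℝ) 1, r ^ c = 1/(c+1) := by
    rw [← MeasureTheory.integral_Ioc_eq_integral_Ioo,
      ← intervalIntegral.integral_of_le zero_le_one,
      integral_rpow (Or.inl (by linarith))]
    rw [Real.one_rpow, Real.zero_rpow hc1.ne']
    ring
  rw [← MeasureTheory.ofReal_integral_eq_lintegral_ofReal hInt
      ((ae_restrict_iff' measurableSet_Ioo).2
        (Filter.Eventually.of_forall fun r hr => Real.rpow_nonneg hr.1.le c)), hval]
  rw [ENNReal.ofReal_rpow_of_pos (by positivity), one_div (c+1),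
    Real.inv_rpow hc1.le, Real.rpow_neg hc1.le]

lemma rho_monomial (p q : ℝ) (hp : 1 ≤ p) (hq : 1 ≤ q) (n : ℕ) :
    rhoE (ENNReal.ofReal p) (ENNReal.ofReal q) (fun z => z ^ n)
      = ENNReal.ofReal (((n : ℝ) * p + 1) ^ (-(1/p))) := by
  have hq0 : (0:ℝ) < q := lt_of_lt_of_le one_pos hq
  have h2π : (0:ℝ) < 2 * Real.pi := Real.two_pi_pos
  rw [rhoE, if_neg ENNReal.ofReal_ne_top, ENNReal.toReal_ofReal hq0.le]
  simp_rw [radial_monomial p hp n]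
  rw [MeasureTheory.setLIntegral_const, Real.volume_Ioo, sub_zero,
    mul_comm (ENNReal.ofReal (2 * Real.pi))⁻¹ _, mul_assoc,
    ENNReal.mul_inv_cancel (ENNReal.ofReal_pos.2 h2π).ne' ENNReal.ofReal_ne_top, mul_one,
    ← ENNReal.rpow_mul, mul_one_div, div_self hq0.ne', ENNReal.rpow_one]

/-- If `1 ≤ p, q < ∞`, `1 ≤ p₀, q₀ < ∞` and `RM(p₀,q₀) ⊆ RM(p,q)` with a norm inequality
`ρ_{p,q}(f) ≤ C ρ_{p₀,q₀}(f)`, then `p₀ ≥ p`. -/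
theorem stmt_6 (p q p₀ q₀ C : ℝ) (hp : 1 ≤ p) (hq : 1 ≤ q) (hp₀ : 1 ≤ p₀) (hq₀ : 1 ≤ q₀)
    (hC : 0 < C)
    (hincl : ∀ f : ℂ → ℂ, DifferentiableOn ℂ f (Metric.ball (0 : ℂ) 1) →
      rhoE (ENNReal.ofReal p₀) (ENNReal.ofReal q₀) f ≠ ⊤ →
      rhoE (ENNReal.ofReal p) (ENNReal.ofReal q) f
        ≤ ENNReal.ofReal C * rhoE (ENNReal.ofReal p₀) (ENNReal.ofReal q₀) f) :
    p ≤ p₀ := by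
  have hp0 : (0:ℝ) < p := lt_of_lt_of_le one_pos hp
  have hp₀0 : (0:ℝ) < p₀ := lt_of_lt_of_le one_pos hp₀
  have key : ∀ n : ℕ, ((n:ℝ)*p+1)^(-(1/p)) ≤ C * (((n:ℝ)*p₀+1)^(-(1/p₀))) := by
    intro n
    have hdiff : DifferentiableOn ℂ (fun z : ℂ => z ^ n) (Metric.ball 0 1) :=
      (differentiable_pow n).differentiableOn
    have h := hincl _ hdiff
      (by rw [rho_monomial p₀ q₀ hp₀ hq₀ n]; exact ENNReal.ofReal_ne_top)
    rw [rho_monomial p q hp hq n, rho_monomial p₀ q₀ hp₀ hq₀ n,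
      ← ENNReal.ofReal_mul hC.le] at h
    refine (ENNReal.ofReal_le_ofReal_iff ?_).1 h
    positivity
  by_contra hcon
  push_neg at hcon
  have hδ : 0 < 1/p₀ - 1/p := by
    have : 1/p < 1/p₀ := one_div_lt_one_div_of_lt hp₀0 hcon
    linarith
  obtain ⟨n, hn1, hnb⟩ : ∃ n : ℕ, 1 ≤ n ∧ C*(p+1) < (n:ℝ)^(1/p₀-1/p) := by
    have h1 := ((tendsto_rpow_atTop hδ).comp
      tendsto_natCast_atTop_atTop).eventually_gt_atTop (C*(p+1))
    obtain ⟨n, hn⟩ := (h1.and (Filter.eventually_ge_atTop 1)).exists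
    exact ⟨n, hn.2, hn.1⟩
  have hnpos : (0:ℝ) < n := by exact_mod_cast hn1
  have hn1' : (1:ℝ) ≤ n := by exact_mod_cast hn1
  have hA : (0:ℝ) < (n:ℝ)*p+1 := by positivity
  have hB : (0:ℝ) < (n:ℝ)*p₀+1 := by positivity
  have keyn := key n
  have ha := Real.rpow_pos_of_pos hA (1/p)
  have hb := Real.rpow_pos_of_pos hB (1/p₀)
  rw [Real.rpow_neg hA.le, Real.rpow_neg hB.le] at keyn
  have h1 : ((n:ℝ)*p₀+1)^(1/p₀) ≤ C * (((n:ℝ)*p+1)^(1/p)) := by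
    rw [inv_le_iff_one_le_mul₀' ha] at keyn
    calc ((n:ℝ)*p₀+1)^(1/p₀)
        = ((n:ℝ)*p₀+1)^(1/p₀) * 1 := (mul_one _).symm
      _ ≤ ((n:ℝ)*p₀+1)^(1/p₀) * (((n:ℝ)*p+1)^(1/p) * (C * (((n:ℝ)*p₀+1)^(1/p₀))⁻¹)) :=
          by exact mul_le_mul_of_nonneg_left keyn hb.le
      _ = C * (((n:ℝ)*p+1)^(1/p)) := by field_simp
  have h2 : ((n:ℝ))^(1/p₀) ≤ ((n:ℝ)*p₀+1)^(1/p₀) :=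
    Real.rpow_le_rpow hnpos.le (by nlinarith) (by positivity)
  have h3 : ((n:ℝ)*p+1)^(1/p) ≤ (p+1) * (n:ℝ)^(1/p) := by
    have hle : (n:ℝ)*p+1 ≤ (p+1)*(n:ℝ) := by nlinarith
    calc ((n:ℝ)*p+1)^(1/p) ≤ ((p+1)*(n:ℝ))^(1/p) :=
          Real.rpow_le_rpow hA.le hle (by positivity)
      _ = (p+1)^(1/p) * (n:ℝ)^(1/p) := Real.mul_rpow (by positivity) hnpos.le
      _ ≤ (p+1) * (n:ℝ)^(1/p) := by
          have hee : (p+1)^(1/p) ≤ (p+1)^(1:ℝ) :=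
            Real.rpow_le_rpow_of_exponent_le (by linarith)
              (by rw [div_le_one hp0]; linarith)
          rw [Real.rpow_one] at hee
          exact mul_le_mul_of_nonneg_right hee (Real.rpow_pos_of_pos hnpos _).le
  have h4 : ((n:ℝ))^(1/p₀) ≤ C * ((p+1) * (n:ℝ)^(1/p)) := by
    calc ((n:ℝ))^(1/p₀) ≤ ((n:ℝ)*p₀+1)^(1/p₀) := h2
      _ ≤ C * (((n:ℝ)*p+1)^(1/p)) := h1
      _ ≤ C * ((p+1) * (n:ℝ)^(1/p)) := mul_le_mul_of_nonneg_left h3 hC.le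
  have h5 : ((n:ℝ))^(1/p₀) = (n:ℝ)^(1/p₀-1/p) * (n:ℝ)^(1/p) := by
    rw [← Real.rpow_add hnpos]; ring_nf
  rw [h5] at h4
  have h6 : (n:ℝ)^(1/p₀-1/p) ≤ C * (p+1) := by
    have hpp := Real.rpow_pos_of_pos hnpos (1/p)
    nlinarith
  linarith
end

section
/- Let 1 ≤ p < ∞. There exists a bounded linear operator T : ℓ^∞ → RM(p,∞) which is an isomorphism onto its range; in particular RM(p,∞) contains a subspace isomorphic to ℓ^∞ and is non-separable. -/
open MeasureTheory Complex Real ENNReal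

noncomputable def aaK (k : ℕ) : ℝ := 1 + ((1000:ℝ) ^ (k+1))⁻¹
noncomputable def thK (k : ℕ) : ℝ := (2:ℝ)⁻¹ ^ k
noncomputable def eeK (p : ℝ) (k : ℕ) : ℝ := ((1000:ℝ) ^ (k+1))⁻¹ ^ (2 - 1/p)
noncomputable def ffK (p : ℝ) (k : ℕ) : ℂ → ℂ := fun z =>
  ((eeK p k : ℝ) : ℂ) * ((z * Complex.exp (-((thK k : ℝ) : ℂ) * Complex.I) - ((aaK k : ℝ) : ℂ)) ^ 2)⁻¹

lemma aaK_sub_one (k : ℕ) : aaK k - 1 = ((1000:ℝ) ^ (k+1))⁻¹ := by simp [aaK]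

lemma aaK_sub_one_pos (k : ℕ) : 0 < aaK k - 1 := by
  rw [aaK_sub_one]; positivity

lemma one_lt_aaK (k : ℕ) : 1 < aaK k := by linarith [aaK_sub_one_pos k]

lemma aaK_sub_one_le (k : ℕ) : aaK k - 1 ≤ (1/1000 : ℝ) * (1/1000)^k := by
  rw [aaK_sub_one, pow_succ, mul_comm]
  rw [mul_inv]
  gcongr
  · norm_num
  · rw [← inv_pow]; gcongr; norm_num

lemma aaK_sub_one_le' (k : ℕ) : aaK k - 1 ≤ 1 := by
  calc aaK k - 1 ≤ (1/1000 : ℝ) * (1/1000)^k := aaK_sub_one_le k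
  _ ≤ (1/1000 : ℝ) * 1 := by gcongr; exact pow_le_one₀ (by norm_num) (by norm_num)
  _ ≤ 1 := by norm_num

lemma aaK_lt_two (k : ℕ) : aaK k < 2 := by
  have h := aaK_sub_one k
  have h2 : (1:ℝ) < (1000:ℝ)^(k+1) := one_lt_pow₀ (by norm_num) (by omega)
  have h3 : ((1000:ℝ)^(k+1))⁻¹ < 1 := by
    rw [inv_lt_one_iff₀]; right; exact h2
  linarith

lemma eeK_pos (p : ℝ) (k : ℕ) : 0 < eeK p k :=
  Real.rpow_pos_of_pos (by positivity) _

lemma eeK_eq (p : ℝ) (k : ℕ) : eeK p k = (aaK k - 1) ^ (2 - 1/p) := by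
  rw [eeK, aaK_sub_one]

lemma eeK_le (p : ℝ) (hp : 1 ≤ p) (k : ℕ) : eeK p k ≤ (1/1000 : ℝ) * (1/1000)^k := by
  have h1 : ((1000:ℝ) ^ (k+1))⁻¹ ≤ 1 := by
    rw [inv_le_one_iff₀]; right; exact one_le_pow₀ (by norm_num)
  have h0 : (0:ℝ) < ((1000:ℝ) ^ (k+1))⁻¹ := by positivity
  have hq : (1:ℝ) ≤ 2 - 1/p := by
    have : 1/p ≤ 1 := by
      rw [div_le_one (by linarith)]; exact hp
    linarith
  calc eeK p k ≤ ((1000:ℝ) ^ (k+1))⁻¹ ^ (1:ℝ) :=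
        Real.rpow_le_rpow_of_exponent_ge h0 h1 hq
    _ = ((1000:ℝ) ^ (k+1))⁻¹ := Real.rpow_one _
    _ ≤ (1/1000 : ℝ) * (1/1000)^k := by rw [← aaK_sub_one]; exact aaK_sub_one_le k

lemma thK_pos (k : ℕ) : 0 < thK k := pow_pos (by norm_num) k
lemma thK_le_one (k : ℕ) : thK k ≤ 1 := pow_le_one₀ (by norm_num) (by norm_num)

lemma thK_def (k : ℕ) : thK k = (2:ℝ)⁻¹ ^ k := rfl

lemma normSq_aux (r φ a : ℝ) :
    ‖(r:ℂ) * Complex.exp ((φ:ℂ) * Complex.I) - (a:ℂ)‖^2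
      = r^2 - 2*a*r*Real.cos φ + a^2 := by
  have h : (r:ℂ) * Complex.exp ((φ:ℂ) * Complex.I) - (a:ℂ)
      = ((r*Real.cos φ - a : ℝ) : ℂ) + ((r*Real.sin φ : ℝ) : ℂ) * Complex.I := by
    rw [Complex.exp_mul_I]
    push_cast [← Complex.ofReal_cos, ← Complex.ofReal_sin]
    ring
  rw [h, Complex.sq_norm, Complex.normSq_add_mul_I]
  nlinarith [Real.sin_sq_add_cos_sq φ]

lemma ray_norm (r φ : ℝ) (hr : 0 ≤ r) : ‖(r:ℂ) * Complex.exp ((φ:ℂ)*Complex.I)‖ = r := by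
  simp [Complex.norm_exp_ofReal_mul_I, Complex.norm_real,
    _root_.abs_of_nonneg hr]

lemma ray_rotate (r φ b : ℝ) :
    ((r:ℂ) * Complex.exp ((φ:ℂ)*Complex.I)) * Complex.exp (-((b:ℝ):ℂ)*Complex.I)
    = (r:ℂ) * Complex.exp ((((φ - b : ℝ)):ℂ)*Complex.I) := by
  rw [mul_assoc, ← Complex.exp_add]
  push_cast
  ring_nf

lemma denom_sq_ge_sub (r φ a : ℝ) (hr : 0 ≤ r) (ha : 0 ≤ a) :
    (a - r)^2 ≤ ‖(r:ℂ) * Complex.exp ((φ:ℂ) * Complex.I) - (a:ℂ)‖^2 := by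
  rw [normSq_aux]
  nlinarith [Real.cos_le_one φ, mul_nonneg (mul_nonneg ha hr) (sub_nonneg.2 (Real.cos_le_one φ))]

lemma denom_sq_ge_sin (r φ a : ℝ) (ha : 1 ≤ a) :
    (Real.sin φ)^2 ≤ ‖(r:ℂ) * Complex.exp ((φ:ℂ) * Complex.I) - (a:ℂ)‖^2 := by
  rw [normSq_aux]
  have ha2 : (0:ℝ) ≤ a^2 - 1 := by nlinarith
  nlinarith [sq_nonneg (r - a*Real.cos φ), Real.sin_sq_add_cos_sq φ,
    mul_nonneg ha2 (sq_nonneg (Real.sin φ))]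

lemma norm_ffK_ray (p : ℝ) (k : ℕ) (r θ : ℝ) :
    ‖ffK p k ((r:ℂ) * Complex.exp ((θ:ℂ)*Complex.I))‖
      = eeK p k * (‖(r:ℂ) * Complex.exp ((((θ - thK k : ℝ)):ℂ)*Complex.I) - ((aaK k : ℝ):ℂ)‖^2)⁻¹ := by
  rw [ffK, ray_rotate]
  rw [norm_mul, norm_inv, norm_pow, Complex.norm_real, Real.norm_eq_abs,
    _root_.abs_of_nonneg (eeK_pos p k).le]

/-- general upper bound via distance to circle of radius `a` -/
lemma ffK_le_close (p : ℝ) (k : ℕ) (r θ : ℝ) (hr : 0 ≤ r) (hr1 : r ≤ 1) :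
    ‖ffK p k ((r:ℂ) * Complex.exp ((θ:ℂ)*Complex.I))‖ ≤ eeK p k * ((aaK k - r)^2)⁻¹ := by
  rw [norm_ffK_ray]
  have h1 : (0:ℝ) < (aaK k - r)^2 := pow_pos (by linarith [one_lt_aaK k]) 2
  have h2 := denom_sq_ge_sub r (θ - thK k) (aaK k) hr (by linarith [one_lt_aaK k])
  have h3 : (‖(r:ℂ) * Complex.exp ((((θ - thK k : ℝ)):ℂ)*Complex.I) - ((aaK k : ℝ):ℂ)‖^2)⁻¹
      ≤ ((aaK k - r)^2)⁻¹ := by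
    apply inv_anti₀ h1 h2
  exact mul_le_mul_of_nonneg_left h3 (eeK_pos p k).le

lemma ffK_le_far (p : ℝ) (k : ℕ) (r θ δ : ℝ) (hδ : 0 < δ)
    (hsin : δ ≤ |Real.sin (θ - thK k)|) :
    ‖ffK p k ((r:ℂ) * Complex.exp ((θ:ℂ)*Complex.I))‖ ≤ eeK p k * (δ^2)⁻¹ := by
  rw [norm_ffK_ray]
  have h1 : (0:ℝ) < δ^2 := pow_pos hδ 2
  have h2 : δ^2 ≤ ‖(r:ℂ) * Complex.exp ((((θ - thK k : ℝ)):ℂ)*Complex.I) - ((aaK k : ℝ):ℂ)‖^2 := by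
    calc δ^2 ≤ |Real.sin (θ - thK k)|^2 := pow_le_pow_left₀ hδ.le hsin 2
      _ = (Real.sin (θ - thK k))^2 := _root_.sq_abs _
      _ ≤ _ := denom_sq_ge_sin r _ (aaK k) (one_lt_aaK k).le
  exact mul_le_mul_of_nonneg_left (inv_anti₀ h1 h2) (eeK_pos p k).le

lemma ffK_eq_self (p : ℝ) (j : ℕ) (r : ℝ) :
    ‖ffK p j ((r:ℂ) * Complex.exp (((thK j:ℝ):ℂ)*Complex.I))‖
      = eeK p j * ((aaK j - r)^2)⁻¹ := by
  rw [norm_ffK_ray]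
  congr 2
  have : ((thK j - thK j : ℝ) : ℂ) = 0 := by norm_num
  rw [this]
  simp only [zero_mul, Complex.exp_zero, mul_one]
  rw [← Complex.ofReal_sub]
  rw [Complex.norm_real, Real.norm_eq_abs]
  rw [_root_.sq_abs]
  ring

lemma thK_diff_ge (j k : ℕ) (h : j ≠ k) : (1/2 : ℝ) * (2:ℝ)⁻¹^k ≤ |thK j - thK k| := by
  have hj : thK j = (2:ℝ)⁻¹^j := rfl
  have hk : thK k = (2:ℝ)⁻¹^k := rfl
  have hnk : (0:ℝ) ≤ (2:ℝ)⁻¹^k := by positivity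
  have hnj : (0:ℝ) ≤ (2:ℝ)⁻¹^j := by positivity
  rw [hj, hk]
  rcases lt_or_gt_of_ne h with hlt | hgt
  · have h1 : (2:ℝ)⁻¹^k ≤ 1/2 * (2:ℝ)⁻¹^j := by
      calc (2:ℝ)⁻¹^k ≤ (2:ℝ)⁻¹^(j+1) :=
            pow_le_pow_of_le_one (by norm_num) (by norm_num) (by omega)
        _ = 1/2 * (2:ℝ)⁻¹^j := by rw [pow_succ]; ring
    rw [_root_.abs_of_nonneg (by linarith : (0:ℝ) ≤ (2:ℝ)⁻¹^j - (2:ℝ)⁻¹^k)]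
    linarith
  · have h1 : (2:ℝ)⁻¹^j ≤ 1/2 * (2:ℝ)⁻¹^k := by
      calc (2:ℝ)⁻¹^j ≤ (2:ℝ)⁻¹^(k+1) :=
            pow_le_pow_of_le_one (by norm_num) (by norm_num) (by omega)
        _ = 1/2 * (2:ℝ)⁻¹^k := by rw [pow_succ]; ring
    rw [abs_of_nonpos (by linarith : (2:ℝ)⁻¹^j - (2:ℝ)⁻¹^k ≤ 0)]
    linarith

lemma thK_diff_le (j k : ℕ) : |thK j - thK k| ≤ 1 := by
  rw [abs_le]
  constructor <;> [linarith [thK_pos j, thK_le_one k]; linarith [thK_pos k, thK_le_one j]]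

lemma abs_sin_ge (x : ℝ) (c : ℝ) (hc : 0 < c) (hx : c ≤ |x|) (hx1 : |x| ≤ 1) :
    (3/4 : ℝ) * c ≤ |Real.sin x| := by
  have h0 : 0 < |x| := lt_of_lt_of_le hc hx
  have hsin : |x| - |x|^3/4 < Real.sin |x| := by
    have := Real.sin_gt_sub_cube h0
    have : 0 ≤ |x|^3 := by positivity
    linarith
  have hcube : |x|^3 ≤ |x| := by
    calc |x|^3 ≤ |x|^1 := pow_le_pow_of_le_one (abs_nonneg x) hx1 (by omega)
      _ = |x| := pow_one _
  have h2 : (3/4:ℝ) * |x| ≤ Real.sin |x| := by nlinarith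
  have h3 : Real.sin |x| ≤ |Real.sin x| := by
    rcases abs_cases x with ⟨he, _⟩ | ⟨he, _⟩
    · rw [he]; exact le_abs_self _
    · rw [he, Real.sin_neg]; exact neg_le_abs _
  calc (3/4:ℝ) * c ≤ (3/4:ℝ) * |x| := by linarith
    _ ≤ Real.sin |x| := h2
    _ ≤ |Real.sin x| := h3

lemma sin_sep (j k : ℕ) (h : j ≠ k) :
    (1/4 : ℝ) * (2:ℝ)⁻¹^k ≤ |Real.sin (thK j - thK k)| := by
  have h1 := thK_diff_ge j k h
  have h2 := thK_diff_le j k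
  have hc : (0:ℝ) < (1/2) * (2:ℝ)⁻¹^k := by positivity
  have := abs_sin_ge (thK j - thK k) _ hc h1 h2
  calc (1/4 : ℝ) * (2:ℝ)⁻¹^k ≤ (3/4) * ((1/2) * (2:ℝ)⁻¹^k) := by
        have : (0:ℝ) ≤ (2:ℝ)⁻¹^k := by positivity
        nlinarith
    _ ≤ _ := this

lemma abs_sin_sub_le (A B : ℝ) : |Real.sin (A - B)| ≤ |Real.sin A| + |Real.sin B| := by
  rw [Real.sin_sub]
  calc |Real.sin A * Real.cos B - Real.cos A * Real.sin B|
      ≤ |Real.sin A * Real.cos B| + |Real.cos A * Real.sin B| := abs_sub _ _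
    _ ≤ |Real.sin A| * 1 + 1 * |Real.sin B| := by
        rw [abs_mul, abs_mul]
        gcongr <;> [exact Real.abs_cos_le_one B; exact Real.abs_cos_le_one A]
    _ = |Real.sin A| + |Real.sin B| := by ring

lemma close_unique (θ : ℝ) (j k : ℕ) (hne : j ≠ k)
    (hj : |Real.sin (θ - thK j)| < (1/8) * (2:ℝ)⁻¹^j)
    (hk : |Real.sin (θ - thK k)| < (1/8) * (2:ℝ)⁻¹^k) : False := by
  have h1 : |Real.sin (thK j - thK k)| ≤ |Real.sin (θ - thK k)| + |Real.sin (θ - thK j)| := by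
    have : thK j - thK k = (θ - thK k) - (θ - thK j) := by ring
    rw [this]
    exact abs_sin_sub_le _ _
  have h2 := sin_sep j k hne
  have h3 := sin_sep k j (Ne.symm hne)
  have h4 : |Real.sin (thK k - thK j)| = |Real.sin (thK j - thK k)| := by
    rw [show thK k - thK j = -(thK j - thK k) by ring, Real.sin_neg, abs_neg]
  rw [h4] at h3
  rcases le_total ((2:ℝ)⁻¹^j) ((2:ℝ)⁻¹^k) with hle | hle
  · -- max is 2⁻¹^k
    have : |Real.sin (thK j - thK k)| < (1/4) * (2:ℝ)⁻¹^k := by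
      calc |Real.sin (thK j - thK k)| ≤ |Real.sin (θ - thK k)| + |Real.sin (θ - thK j)| := h1
        _ < (1/8) * (2:ℝ)⁻¹^k + (1/8) * (2:ℝ)⁻¹^j := by linarith
        _ ≤ (1/4) * (2:ℝ)⁻¹^k := by linarith
    linarith
  · have : |Real.sin (thK j - thK k)| < (1/4) * (2:ℝ)⁻¹^j := by
      calc |Real.sin (thK j - thK k)| ≤ |Real.sin (θ - thK k)| + |Real.sin (θ - thK j)| := h1
        _ < (1/8) * (2:ℝ)⁻¹^k + (1/8) * (2:ℝ)⁻¹^j := by linarith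
        _ ≤ (1/4) * (2:ℝ)⁻¹^j := by linarith
    linarith

lemma summable_base : Summable (fun k : ℕ => ((1/250 : ℝ))^k) :=
  summable_geometric_of_lt_one (by norm_num) (by norm_num)

lemma tsum_base : ∑' k : ℕ, ((1/250 : ℝ))^k = 250/249 := by
  rw [tsum_geometric_of_lt_one (by norm_num) (by norm_num)]
  norm_num

lemma key_integral (p a : ℝ) (hp : 1 ≤ p) (ha : 1 < a) :
    ∫⁻ r in Set.Ioo (0:ℝ) 1, ENNReal.ofReal ((a - r) ^ (-(2*p)))
      ≤ ENNReal.ofReal ((a-1) ^ (1 - 2*p)) := by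
  have ha1 : (0:ℝ) < a - 1 := by linarith
  have hcont : ContinuousOn (fun r : ℝ => (a - r) ^ (-(2*p))) (Set.Icc 0 1) := by
    apply ContinuousOn.rpow_const
    · exact (continuous_const.sub continuous_id).continuousOn
    · intro x hx
      left
      have : (0:ℝ) < a - x := by
        rcases hx with ⟨_, hx2⟩; linarith
      exact ne_of_gt this
  have hinteg : IntegrableOn (fun r : ℝ => (a - r) ^ (-(2*p))) (Set.Ioo 0 1) :=
    (hcont.integrableOn_Icc).mono_set Set.Ioo_subset_Icc_self
  have hnn : 0 ≤ᵐ[volume.restrict (Set.Ioo (0:ℝ) 1)] (fun r : ℝ => (a - r) ^ (-(2*p))) := by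
    filter_upwards [ae_restrict_mem measurableSet_Ioo] with x hx
    have : (0:ℝ) < a - x := by rcases hx with ⟨_, h2⟩; linarith
    positivity
  rw [← ofReal_integral_eq_lintegral_ofReal hinteg hnn]
  apply ENNReal.ofReal_le_ofReal
  have heq : ∫ r in Set.Ioo (0:ℝ) 1, (a - r) ^ (-(2*p))
      = ∫ r in (0:ℝ)..1, (a - r) ^ (-(2*p)) := by
    rw [intervalIntegral.integral_of_le zero_le_one, integral_Ioc_eq_integral_Ioo]
  rw [heq]
  have hsub : (∫ r in (0:ℝ)..1, (a - r) ^ (-(2*p)))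
      = ∫ x in (a-1)..(a-0), x ^ (-(2*p)) :=
    intervalIntegral.integral_comp_sub_left (fun x : ℝ => x ^ (-(2*p))) a
  rw [hsub]
  have h0 : (0:ℝ) ∉ Set.uIcc (a-1) (a-0) := by
    rw [Set.uIcc_of_le (by linarith)]
    intro hmem
    rcases hmem with ⟨h1, _⟩
    linarith
  rw [integral_rpow (Or.inr ⟨by intro hcon; linarith, h0⟩)]
  have hs : -(2*p) + 1 = 1 - 2*p := by ring
  rw [hs]
  have hu : (0:ℝ) < (a-1) ^ (1-2*p) := Real.rpow_pos_of_pos ha1 _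
  have hv : (0:ℝ) < (a-0) ^ (1-2*p) := Real.rpow_pos_of_pos (by linarith) _
  rw [div_le_iff_of_neg (by linarith : 1 - 2*p < 0)]
  nlinarith [hu, hv]

lemma close_integral' (p a eps : ℝ) (hp : 1 ≤ p) (ha : 1 < a)
    (heps : eps = (a - 1) ^ (2 - 1/p)) (c : ℝ) (hc : 0 ≤ c) :
    ∫⁻ r in Set.Ioo (0:ℝ) 1, ENNReal.ofReal ((c * (eps * ((a - r)^2)⁻¹)) ^ p)
      ≤ ENNReal.ofReal (c ^ p) := by
  have hp0 : (0:ℝ) < p := by linarith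
  have ha1 : (0:ℝ) < a - 1 := by linarith
  have heps0 : 0 < eps := by rw [heps]; exact Real.rpow_pos_of_pos ha1 _
  have hstep : ∀ r ∈ Set.Ioo (0:ℝ) 1,
      (c * (eps * ((a - r)^2)⁻¹)) ^ p = (c^p * eps^p) * (a - r) ^ (-(2*p)) := by
    intro r hr
    have har : (0:ℝ) < a - r := by rcases hr with ⟨_, h2⟩; linarith
    have h1 : ((a - r)^2)⁻¹ = (a - r) ^ (-2 : ℝ) := by
      rw [Real.rpow_neg har.le]
      norm_num
    rw [h1, Real.mul_rpow hc (by positivity), Real.mul_rpow heps0.le (by positivity),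
      show -(2*p) = (-2)*p by ring, Real.rpow_mul har.le]
    ring
  rw [setLIntegral_congr_fun measurableSet_Ioo
    (fun r hr => by rw [hstep r hr])]
  have hfac : ∀ r : ℝ, ENNReal.ofReal ((c^p * eps^p) * (a - r) ^ (-(2*p)))
      = ENNReal.ofReal (c^p * eps^p) * ENNReal.ofReal ((a - r) ^ (-(2*p))) := fun r =>
    ENNReal.ofReal_mul (by positivity)
  simp_rw [hfac]
  rw [lintegral_const_mul' _ _ ENNReal.ofReal_ne_top]
  have hone : eps^p * (a-1)^(1-2*p) = 1 := by
    have hexp : (2 - 1/p)*p + (1-2*p) = 0 := by field_simp; ring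
    rw [heps, ← Real.rpow_mul ha1.le, ← Real.rpow_add ha1, hexp, Real.rpow_zero]
  calc ENNReal.ofReal (c^p * eps^p) * ∫⁻ r in Set.Ioo (0:ℝ) 1, ENNReal.ofReal ((a - r) ^ (-(2*p)))
      ≤ ENNReal.ofReal (c^p * eps^p) * ENNReal.ofReal ((a-1) ^ (1 - 2*p)) :=
        mul_le_mul_right (key_integral p a hp ha) _
    _ = ENNReal.ofReal (c^p * (eps^p * (a-1) ^ (1 - 2*p))) := by
        rw [← ENNReal.ofReal_mul (by positivity), mul_assoc]
    _ = ENNReal.ofReal (c^p) := by rw [hone, mul_one]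

lemma norm_ffK (p : ℝ) (k : ℕ) (z : ℂ) :
    ‖ffK p k z‖ = eeK p k * (‖z * Complex.exp (-((thK k : ℝ):ℂ) * Complex.I) - ((aaK k : ℝ):ℂ)‖^2)⁻¹ := by
  rw [ffK, norm_mul, norm_inv, norm_pow, Complex.norm_real, Real.norm_eq_abs,
    _root_.abs_of_nonneg (eeK_pos p k).le]

lemma norm_exp_neg (t : ℝ) : ‖Complex.exp (-(t:ℂ) * Complex.I)‖ = 1 := by
  have : -(t:ℂ) = ((-t : ℝ) : ℂ) := by push_cast; ring
  rw [this, Complex.norm_exp_ofReal_mul_I]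

lemma ffK_le_ball (p : ℝ) (hp : 1 ≤ p) (k : ℕ) (z : ℂ) (R : ℝ) (hzR : ‖z‖ ≤ R) (hR : R < 1) :
    ‖ffK p k z‖ ≤ ((1-R)^2)⁻¹ * ((1/1000) * (1/1000)^k) := by
  have h1 : ‖z * Complex.exp (-((thK k : ℝ):ℂ) * Complex.I)‖ = ‖z‖ := by
    rw [norm_mul, norm_exp_neg, mul_one]
  have h2 : (1 - R) ≤ ‖z * Complex.exp (-((thK k : ℝ):ℂ) * Complex.I) - ((aaK k : ℝ):ℂ)‖ := by
    have h3 := norm_sub_norm_le (((aaK k : ℝ):ℂ)) (z * Complex.exp (-((thK k : ℝ):ℂ) * Complex.I))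
    rw [norm_sub_rev] at h3
    have h4 : ‖((aaK k : ℝ):ℂ)‖ = aaK k := by
      rw [Complex.norm_real, Real.norm_eq_abs, _root_.abs_of_nonneg (by linarith [one_lt_aaK k])]
    rw [h4, h1] at h3
    have := one_lt_aaK k
    linarith
  have h5 : (1-R)^2 ≤ ‖z * Complex.exp (-((thK k : ℝ):ℂ) * Complex.I) - ((aaK k : ℝ):ℂ)‖^2 :=
    pow_le_pow_left₀ (by linarith) h2 2
  have h6 : (0:ℝ) < (1-R)^2 := pow_pos (by linarith) 2
  rw [norm_ffK]
  calc eeK p k * (‖z * Complex.exp (-((thK k : ℝ):ℂ) * Complex.I) - ((aaK k : ℝ):ℂ)‖^2)⁻¹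
      ≤ ((1/1000) * (1/1000)^k) * ((1-R)^2)⁻¹ :=
        mul_le_mul (eeK_le p hp k) (inv_anti₀ h6 h5) (by positivity) (by positivity)
    _ = ((1-R)^2)⁻¹ * ((1/1000) * (1/1000)^k) := by ring

lemma tail_le (p : ℝ) (hp : 1 ≤ p) (α : ℕ → ℂ) (A : ℝ) (hA : 0 ≤ A) (hα : ∀ k, ‖α k‖ ≤ A)
    (θ r : ℝ) (j : ℕ) (c' : ℝ) (hc' : 1/8 ≤ c')
    (h : ∀ k, k ≠ j → c' * (2:ℝ)⁻¹^k ≤ |Real.sin (θ - thK k)|) :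
    ‖∑' k, ite (k = j) 0 (α k * ffK p k ((r:ℂ) * Complex.exp ((θ:ℂ)*Complex.I)))‖
      ≤ A * (c'⁻¹^2 * (1/500)) := by
  have hc0 : (0:ℝ) < c' := by linarith
  set z := (r:ℂ) * Complex.exp ((θ:ℂ)*Complex.I) with hz
  set g : ℕ → ℝ := fun k => A * c'⁻¹^2 * ((1/1000) * (1/250)^k) with hg
  have hgk : ∀ k, ‖ite (k = j) 0 (α k * ffK p k z)‖ ≤ g k := by
    intro k
    by_cases hkj : k = j
    · rw [if_pos hkj, norm_zero, hg]
      exact mul_nonneg (mul_nonneg hA (sq_nonneg _)) (by positivity)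
    · rw [if_neg hkj]
      have hδ : (0:ℝ) < c' * (2:ℝ)⁻¹^k := by positivity
      have h1 : ‖ffK p k z‖ ≤ eeK p k * ((c' * (2:ℝ)⁻¹^k)^2)⁻¹ :=
        ffK_le_far p k r θ _ hδ (h k hkj)
      have h2 : eeK p k * ((c' * (2:ℝ)⁻¹^k)^2)⁻¹ ≤ c'⁻¹^2 * ((1/1000) * (1/250)^k) := by
        have he := eeK_le p hp k
        have hq : ((c' * (2:ℝ)⁻¹^k)^2)⁻¹ = c'⁻¹^2 * (4:ℝ)^k := by
          have h4 : (((2:ℝ)⁻¹)^k)^2 = ((4:ℝ)⁻¹)^k := by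
            rw [← pow_mul, mul_comm, pow_mul]
            congr 1
            norm_num
          rw [mul_pow, mul_inv, h4, ← inv_pow, ← inv_pow, inv_inv]
        rw [hq]
        have h1000 : (0:ℝ) < (1/1000) * (1/1000:ℝ)^k := by positivity
        calc eeK p k * (c'⁻¹^2 * (4:ℝ)^k)
            ≤ ((1/1000) * (1/1000)^k) * (c'⁻¹^2 * (4:ℝ)^k) := by
              apply mul_le_mul_of_nonneg_right he (by positivity)
          _ = c'⁻¹^2 * ((1/1000) * ((1/1000)^k * (4:ℝ)^k)) := by ring
          _ = c'⁻¹^2 * ((1/1000) * (1/250)^k) := by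
              rw [← mul_pow]; norm_num
      calc ‖α k * ffK p k z‖ = ‖α k‖ * ‖ffK p k z‖ := norm_mul _ _
        _ ≤ A * (c'⁻¹^2 * ((1/1000) * (1/250)^k)) :=
            mul_le_mul (hα k) (le_trans h1 h2) (norm_nonneg _) hA
        _ = g k := by rw [hg]; ring
  have hgsum : Summable g := by
    apply Summable.mul_left
    apply Summable.mul_left
    exact summable_base
  have hsum2 : Summable (fun k => ‖ite (k = j) 0 (α k * ffK p k z)‖) :=
    Summable.of_nonneg_of_le (fun k => norm_nonneg _) hgk hgsum
  calc ‖∑' k, ite (k = j) 0 (α k * ffK p k z)‖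
      ≤ ∑' k, ‖ite (k = j) 0 (α k * ffK p k z)‖ := norm_tsum_le_tsum_norm hsum2
    _ ≤ ∑' k, g k := Summable.tsum_le_tsum hgk hsum2 hgsum
    _ = A * c'⁻¹^2 * ((1/1000) * (250/249)) := by
        rw [hg, tsum_mul_left, tsum_mul_left, tsum_base]
    _ ≤ A * (c'⁻¹^2 * (1/500)) := by
        have : (0:ℝ) ≤ A * c'⁻¹^2 := mul_nonneg hA (sq_nonneg _)
        nlinarith

/-- For `1 ≤ p < ∞`, there is a bounded linear embedding of `ℓ^∞` into `RM(p,∞)`: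
a sequence of holomorphic functions `f_k` such that for every bounded sequence `α`,
`F_α(z) = Σ_k α_k f_k(z)` is holomorphic on `𝔻` and `c ‖α‖_∞ ≤ ρ_{p,∞}(F_α) ≤ C ‖α‖_∞`.
In particular `RM(p,∞)` contains an isomorphic copy of `ℓ^∞` and is non-separable. -/
theorem stmt_14 (p : ℝ) (hp : 1 ≤ p) :
    ∃ (f : ℕ → ℂ → ℂ) (c C : ℝ), 0 < c ∧ 0 < C ∧
      (∀ k, DifferentiableOn ℂ (f k) (Metric.ball (0 : ℂ) 1)) ∧
      ∀ α : lp (fun _ : ℕ => ℂ) ⊤,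
        DifferentiableOn ℂ (fun z => ∑' k, α k * f k z) (Metric.ball (0 : ℂ) 1) ∧
        ENNReal.ofReal (c * ‖α‖)
            ≤ rhoE (ENNReal.ofReal p) ⊤ (fun z => ∑' k, α k * f k z) ∧
        rhoE (ENNReal.ofReal p) ⊤ (fun z => ∑' k, α k * f k z)
            ≤ ENNReal.ofReal (C * ‖α‖) := by
  have hp0 : (0:ℝ) < p := by linarith
  have hptop : ENNReal.ofReal p ≠ ⊤ := ENNReal.ofReal_ne_top
  have hpt : (ENNReal.ofReal p).toReal = p := ENNReal.toReal_ofReal (by linarith)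
  have hradial : ∀ (f : ℂ → ℂ) (θ : ℝ), radialLp (ENNReal.ofReal p) f θ
      = (∫⁻ r in Set.Ioo (0:ℝ) 1,
          ENNReal.ofReal (‖f ((r:ℝ) * Complex.exp ((θ:ℂ) * Complex.I))‖ ^ p)) ^ (1/p) := by
    intro f θ
    simp only [radialLp, if_neg hptop, hpt]
  have hrho : ∀ f : ℂ → ℂ, rhoE (ENNReal.ofReal p) ⊤ f
      = ⨆ θ : Set.Ico (0:ℝ) (2*Real.pi), radialLp (ENNReal.ofReal p) f (θ:ℝ) := by
    intro f
    simp only [rhoE, if_pos]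
  have hdiffk : ∀ k, DifferentiableOn ℂ (ffK p k) (Metric.ball (0:ℂ) 1) := by
    intro k z hz
    rw [Metric.mem_ball, dist_zero_right] at hz
    apply DifferentiableAt.differentiableWithinAt
    apply DifferentiableAt.const_mul
    apply DifferentiableAt.inv
    · exact ((differentiableAt_id.mul_const _).sub_const _).pow 2
    · apply pow_ne_zero
      intro hcon
      rw [sub_eq_zero] at hcon
      have h1 : ‖z * Complex.exp (-((thK k : ℝ):ℂ) * Complex.I)‖ = ‖z‖ := by
        rw [norm_mul, norm_exp_neg, mul_one]
      have h2 : ‖((aaK k : ℝ):ℂ)‖ = aaK k := by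
        rw [Complex.norm_real, Real.norm_eq_abs,
          _root_.abs_of_nonneg (by linarith [one_lt_aaK k])]
      rw [hcon, h2] at h1
      have := one_lt_aaK k
      linarith
  refine ⟨ffK p, 1/16, 4, by norm_num, by norm_num, hdiffk, ?_⟩
  intro α
  have hαk : ∀ k, ‖α k‖ ≤ ‖α‖ := fun k => lp.norm_apply_le_norm ENNReal.top_ne_zero α k
  have hαnn : (0:ℝ) ≤ ‖α‖ := norm_nonneg α
  have husum : ∀ c : ℝ, Summable (fun k : ℕ => c * ((1/1000:ℝ) * (1/1000)^k)) := by
    intro c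
    apply Summable.mul_left
    apply Summable.mul_left
    exact summable_geometric_of_lt_one (by norm_num) (by norm_num)
  have hbd : ∀ (R : ℝ), R < 1 → ∀ (z : ℂ), ‖z‖ ≤ R → ∀ k,
      ‖α k * ffK p k z‖ ≤ (‖α‖ * ((1-R)^2)⁻¹) * ((1/1000) * (1/1000)^k) := by
    intro R hR z hzR k
    calc ‖α k * ffK p k z‖ = ‖α k‖ * ‖ffK p k z‖ := norm_mul _ _
      _ ≤ ‖α‖ * (((1-R)^2)⁻¹ * ((1/1000) * (1/1000)^k)) :=
          mul_le_mul (hαk k) (ffK_le_ball p hp k z R hzR hR) (norm_nonneg _) hαnn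
      _ = (‖α‖ * ((1-R)^2)⁻¹) * ((1/1000) * (1/1000)^k) := by ring
  have hsumz : ∀ z : ℂ, ‖z‖ < 1 → Summable (fun k => α k * ffK p k z) := by
    intro z hz
    exact Summable.of_norm_bounded (husum (‖α‖ * ((1-‖z‖)^2)⁻¹)) (hbd ‖z‖ hz z le_rfl)
  have hdiffF : DifferentiableOn ℂ (fun z => ∑' k, α k * ffK p k z) (Metric.ball (0:ℂ) 1) := by
    have hTLU : TendstoLocallyUniformlyOn
        (fun (t : Finset ℕ) (z : ℂ) => ∑ k ∈ t, α k * ffK p k z)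
        (fun z => ∑' k, α k * ffK p k z) Filter.atTop (Metric.ball (0:ℂ) 1) := by
      rw [tendstoLocallyUniformlyOn_iff_forall_isCompact Metric.isOpen_ball]
      intro K hKs hK
      obtain ⟨R, hR1, hRb⟩ : ∃ R : ℝ, R < 1 ∧ ∀ x ∈ K, ‖x‖ ≤ R := by
        rcases K.eq_empty_or_nonempty with he | hne
        · exact ⟨0, by norm_num, by rw [he]; intro x hx; exact absurd hx (Set.notMem_empty x)⟩
        · obtain ⟨z0, hz0K, hmax⟩ := hK.exists_isMaxOn hne continuous_norm.continuousOn
          refine ⟨‖z0‖, ?_, fun x hx => hmax hx⟩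
          have := hKs hz0K
          rwa [Metric.mem_ball, dist_zero_right] at this
      exact tendstoUniformlyOn_tsum (husum (‖α‖ * ((1-R)^2)⁻¹))
        (fun k z hzK => hbd R hR1 z (hRb z hzK) k)
    refine hTLU.differentiableOn ?_ Metric.isOpen_ball
    filter_upwards with t
    exact DifferentiableOn.fun_sum (fun k _ => (hdiffk k).const_mul (α k))
  by_cases hα0 : ‖α‖ = 0
  · -- zero case
    have hα' : α = 0 := norm_eq_zero.mp hα0
    have hzero : (fun z : ℂ => ∑' k, α k * ffK p k z) = fun _ => (0:ℂ) := by
      funext z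
      rw [hα']
      simp
    have hrho0 : rhoE (ENNReal.ofReal p) ⊤ (fun z => ∑' k, α k * ffK p k z) = 0 := by
      rw [hzero, hrho]
      apply le_antisymm _ zero_le
      apply iSup_le
      intro θ
      rw [hradial]
      simp only [norm_zero]
      rw [Real.zero_rpow hp0.ne']
      simp only [ENNReal.ofReal_zero, lintegral_zero]
      exact le_of_eq (ENNReal.zero_rpow_of_pos (one_div_pos.mpr hp0))
    refine ⟨hdiffF, ?_, ?_⟩
    · rw [hα0, mul_zero, ENNReal.ofReal_zero]
      exact zero_le
    · rw [hα0, mul_zero, ENNReal.ofReal_zero, hrho0]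
  -- main case
  have hαpos : 0 < ‖α‖ := lt_of_le_of_ne hαnn (Ne.symm hα0)
  refine ⟨hdiffF, ?_, ?_⟩
  · -- LOWER BOUND
    obtain ⟨j, hj⟩ : ∃ j, ‖α‖/2 < ‖α j‖ := by
      have h1 : ‖α‖/2 < ⨆ k, ‖α k‖ := by
        rw [← lp.norm_eq_ciSup]
        linarith
      exact exists_lt_of_lt_ciSup h1
    have haj := one_lt_aaK j
    have haj2 := aaK_lt_two j
    have ha1 : (0:ℝ) < aaK j - 1 := by linarith
    set Y : ℝ := (aaK j - 1) ^ (-(1/p)) with hY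
    have hY1 : (1:ℝ) ≤ Y :=
      Real.one_le_rpow_of_pos_of_le_one_of_nonpos ha1 (aaK_sub_one_le' j)
        (neg_nonpos.mpr (by positivity))
    have hYnn : (0:ℝ) ≤ Y := by linarith
    set W : ℝ := ‖α‖/16 * Y with hW
    have hWnn : (0:ℝ) ≤ W := by positivity
    have hmem : thK j ∈ Set.Ico (0:ℝ) (2*Real.pi) := by
      constructor
      · exact (thK_pos j).le
      · have := thK_le_one j
        have := Real.pi_gt_three
        linarith
    have hptlow : ∀ r ∈ Set.Ioo (2 - aaK j) 1,
        ENNReal.ofReal (W^p)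
          ≤ ENNReal.ofReal
            (‖∑' k, α k * ffK p k ((r:ℝ) * Complex.exp (((thK j : ℝ):ℂ) * Complex.I))‖ ^ p) := by
      intro r hr
      obtain ⟨hrl, hr1⟩ := hr
      have hr0 : (0:ℝ) < r := by linarith
      set z : ℂ := (r:ℝ) * Complex.exp (((thK j : ℝ):ℂ) * Complex.I) with hzdef
      have hzn : ‖z‖ < 1 := by rw [hzdef, ray_norm r _ hr0.le]; exact hr1
      have hdecomp := Summable.tsum_eq_add_tsum_ite (hsumz z hzn) j
      set X : ℝ := eeK p j * ((aaK j - r)^2)⁻¹ with hX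
      have hXnn : (0:ℝ) ≤ X := by
        have := eeK_pos p j
        positivity
      have hmain : ‖α j * ffK p j z‖ = ‖α j‖ * X := by
        rw [norm_mul, hzdef, ffK_eq_self]
      have hXlow : (1/4:ℝ) * Y ≤ X := by
        have hb : (aaK j - r)^2 ≤ (2*(aaK j - 1))^2 :=
          pow_le_pow_left₀ (by linarith) (by linarith) 2
        have hinv : ((2*(aaK j-1))^2)⁻¹ ≤ ((aaK j - r)^2)⁻¹ :=
          inv_anti₀ (pow_pos (by linarith) 2) hb
        have heq2 : eeK p j * (((aaK j - 1))^2)⁻¹ = Y := by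
          rw [eeK_eq, hY]
          have h2 : ((aaK j - 1)^2)⁻¹ = (aaK j - 1) ^ (-2:ℝ) := by
            rw [Real.rpow_neg ha1.le]
            norm_num
          rw [h2, ← Real.rpow_add ha1]
          congr 1
          ring
        have heq3 : ((2*(aaK j-1))^2)⁻¹ = (1/4) * ((aaK j - 1)^2)⁻¹ := by
          rw [mul_pow, mul_inv]
          norm_num
        calc (1/4:ℝ) * Y = eeK p j * ((1/4) * ((aaK j - 1)^2)⁻¹) := by
              rw [← heq2]; ring
          _ = eeK p j * ((2*(aaK j-1))^2)⁻¹ := by rw [heq3]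
          _ ≤ X := by
              rw [hX]
              exact mul_le_mul_of_nonneg_left hinv (eeK_pos p j).le
      have hX14 : (1/4:ℝ) ≤ X := by nlinarith
      have htail : ‖∑' k, ite (k = j) 0 (α k * ffK p k z)‖ ≤ ‖α‖ * (1/16) := by
        have h := tail_le p hp (fun k => α k) ‖α‖ hαnn hαk (thK j) r j (1/4) (by norm_num)
          (fun k hk => sin_sep j k (Ne.symm hk))
        rw [hzdef]
        calc ‖∑' k, ite (k = j) 0 (α k * ffK p k ((r:ℝ) * Complex.exp (((thK j:ℝ):ℂ) * Complex.I)))‖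
            ≤ ‖α‖ * ((1/4:ℝ)⁻¹^2 * (1/500)) := h
          _ ≤ ‖α‖ * (1/16) := by
              apply mul_le_mul_of_nonneg_left _ hαnn
              norm_num
      have htri : ‖α j‖ * X - ‖α‖ * (1/16) ≤ ‖∑' k, α k * ffK p k z‖ := by
        have h1 : ‖α j * ffK p j z‖ ≤ ‖∑' k, α k * ffK p k z‖ + ‖∑' k, ite (k = j) 0 (α k * ffK p k z)‖ := by
          calc ‖α j * ffK p j z‖
              = ‖(∑' k, α k * ffK p k z) - ∑' k, ite (k = j) 0 (α k * ffK p k z)‖ := by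
                rw [hdecomp]; congr 1; ring
            _ ≤ _ := norm_sub_le _ _
        rw [hmain] at h1
        linarith
      have hs1 : ‖α‖/2 * X ≤ ‖α j‖ * X := mul_le_mul_of_nonneg_right hj.le hXnn
      have hs2 : ‖α‖/8 * Y ≤ ‖α‖/2 * X := by
        have := mul_le_mul_of_nonneg_left hXlow (by positivity : (0:ℝ) ≤ ‖α‖/2)
        calc ‖α‖/8 * Y = ‖α‖/2 * ((1/4)*Y) := by ring
          _ ≤ ‖α‖/2 * X := this
      have hs3 : ‖α‖ * (1/16) ≤ ‖α‖/16 * Y := by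
        calc ‖α‖ * (1/16) = ‖α‖/16 * 1 := by ring
          _ ≤ ‖α‖/16 * Y := mul_le_mul_of_nonneg_left hY1 (by positivity)
      have hWF : W ≤ ‖∑' k, α k * ffK p k z‖ := by
        rw [hW]
        have : ‖α‖/8 * Y - ‖α‖*(1/16) ≤ ‖∑' k, α k * ffK p k z‖ := by linarith
        have hYY : ‖α‖/8 * Y - ‖α‖/16 * Y = ‖α‖/16 * Y := by ring
        linarith
      exact ENNReal.ofReal_le_ofReal (Real.rpow_le_rpow hWnn hWF hp0.le)
    have hkey : ENNReal.ofReal ((‖α‖/16)^p)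
        ≤ ∫⁻ r in Set.Ioo (0:ℝ) 1,
            ENNReal.ofReal
              (‖∑' k, α k * ffK p k ((r:ℝ) * Complex.exp (((thK j : ℝ):ℂ) * Complex.I))‖ ^ p) := by
      have hWvol : ENNReal.ofReal ((‖α‖/16)^p)
          = ENNReal.ofReal (W^p) * volume (Set.Ioo (2 - aaK j) 1) := by
        rw [Real.volume_Ioo]
        have h1 : (1:ℝ) - (2 - aaK j) = aaK j - 1 := by ring
        rw [h1, ← ENNReal.ofReal_mul (by positivity)]
        congr 1
        rw [hW, Real.mul_rpow (by positivity) hYnn, hY]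
        have h2 : ((aaK j - 1) ^ (-(1/p)))^p = (aaK j - 1)⁻¹ := by
          rw [← Real.rpow_mul ha1.le]
          have : (-(1/p)) * p = -1 := by field_simp
          rw [this, Real.rpow_neg_one]
        rw [h2, mul_assoc, inv_mul_cancel₀ (ne_of_gt ha1), mul_one]
      rw [hWvol]
      calc ENNReal.ofReal (W^p) * volume (Set.Ioo (2 - aaK j) 1)
          = ∫⁻ _ in Set.Ioo (2 - aaK j) 1, ENNReal.ofReal (W^p) :=
            (setLIntegral_const _ _).symm
        _ ≤ ∫⁻ r in Set.Ioo (2 - aaK j) 1,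
              ENNReal.ofReal
                (‖∑' k, α k * ffK p k ((r:ℝ) * Complex.exp (((thK j : ℝ):ℂ) * Complex.I))‖ ^ p) :=
            lintegral_mono_ae ((ae_restrict_mem measurableSet_Ioo).mono hptlow)
        _ ≤ _ := lintegral_mono' (Measure.restrict_mono
              (Set.Ioo_subset_Ioo (by linarith) le_rfl) le_rfl) le_rfl
    rw [hrho]
    apply le_iSup_of_le ⟨thK j, hmem⟩
    rw [hradial]
    have hfinal : ENNReal.ofReal (1/16 * ‖α‖) = (ENNReal.ofReal ((‖α‖/16)^p)) ^ (1/p) := by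
      rw [← ENNReal.ofReal_rpow_of_pos (show (0:ℝ) < ‖α‖/16 by positivity),
        ← ENNReal.rpow_mul, mul_one_div_cancel hp0.ne', ENNReal.rpow_one]
      congr 1
      ring
    rw [hfinal]
    exact ENNReal.rpow_le_rpow hkey (le_of_lt (one_div_pos.mpr hp0))
  · -- UPPER BOUND
    have hupperAll : ∀ θ : ℝ, (∫⁻ r in Set.Ioo (0:ℝ) 1,
        ENNReal.ofReal (‖(∑' k, α k * ffK p k ((r:ℝ) * Complex.exp ((θ:ℂ) * Complex.I)))‖ ^ p)) ^ (1/p)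
        ≤ ENNReal.ofReal (4*‖α‖) := by
      intro θ
      have hupper : (∫⁻ r in Set.Ioo (0:ℝ) 1,
          ENNReal.ofReal (‖(∑' k, α k * ffK p k ((r:ℝ) * Complex.exp ((θ:ℂ) * Complex.I)))‖ ^ p))
          ≤ ENNReal.ofReal ((4*‖α‖) ^ p) := by
        obtain ⟨k₀, hk₀⟩ : ∃ k₀ : ℕ, ∀ k, k ≠ k₀ →
            (1/8:ℝ) * (2:ℝ)⁻¹^k ≤ |Real.sin (θ - thK k)| := by
          by_cases hex : ∃ m : ℕ, |Real.sin (θ - thK m)| < (1/8) * (2:ℝ)⁻¹^m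
          · obtain ⟨m, hm⟩ := hex
            refine ⟨m, fun k hk => ?_⟩
            by_contra hcon
            push_neg at hcon
            exact close_unique θ k m hk hcon hm
          · push_neg at hex
            exact ⟨0, fun k _ => hex k⟩
        have hpt2 : ∀ r ∈ Set.Ioo (0:ℝ) 1,
            ENNReal.ofReal (‖(∑' k, α k * ffK p k ((r:ℝ) * Complex.exp ((θ:ℂ) * Complex.I)))‖ ^ p)
            ≤ ENNReal.ofReal (((2*‖α‖) * (eeK p k₀ * ((aaK k₀ - r)^2)⁻¹)) ^ p)
              + ENNReal.ofReal ((2*(‖α‖*(1/7))) ^ p) := by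
          intro r hr
          obtain ⟨hr0, hr1⟩ := hr
          set z : ℂ := (r:ℝ) * Complex.exp ((θ:ℂ) * Complex.I) with hzdef
          have hzn : ‖z‖ < 1 := by rw [hzdef, ray_norm r θ hr0.le]; exact hr1
          have hdecomp := Summable.tsum_eq_add_tsum_ite (hsumz z hzn) k₀
          set u : ℝ := ‖α‖ * (eeK p k₀ * ((aaK k₀ - r)^2)⁻¹) with hu
          have hun : 0 ≤ u := by
            have h1 : 0 < eeK p k₀ := eeK_pos p k₀
            have h2 : 0 < aaK k₀ - r := by linarith [one_lt_aaK k₀]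
            positivity
          have hmain : ‖α k₀ * ffK p k₀ z‖ ≤ u := by
            rw [norm_mul, hu]
            exact mul_le_mul (hαk _) (ffK_le_close p k₀ r θ hr0.le hr1.le) (norm_nonneg _) hαnn
          have htail : ‖∑' k, ite (k = k₀) 0 (α k * ffK p k z)‖ ≤ ‖α‖ * (1/7) := by
            have h := tail_le p hp (fun k => α k) ‖α‖ hαnn hαk θ r k₀ (1/8) le_rfl hk₀
            rw [hzdef]
            calc ‖∑' k, ite (k = k₀) 0 (α k * ffK p k ((r:ℝ) * Complex.exp ((θ:ℂ) * Complex.I)))‖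
                ≤ ‖α‖ * ((1/8:ℝ)⁻¹^2 * (1/500)) := h
              _ ≤ ‖α‖ * (1/7) := by
                  apply mul_le_mul_of_nonneg_left _ hαnn
                  norm_num
          have hF : ‖∑' k, α k * ffK p k z‖ ≤ u + ‖α‖*(1/7) := by
            rw [hdecomp]
            exact le_trans (norm_add_le _ _) (add_le_add hmain htail)
          have hvn : (0:ℝ) ≤ ‖α‖*(1/7) := by linarith
          have hsplit : (u + ‖α‖*(1/7))^p ≤ (2*u)^p + (2*(‖α‖*(1/7)))^p := by
            rcases le_total u (‖α‖*(1/7)) with hc | hc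
            · calc (u + ‖α‖*(1/7))^p ≤ (2*(‖α‖*(1/7)))^p :=
                  Real.rpow_le_rpow (by linarith) (by linarith) hp0.le
                _ ≤ (2*u)^p + (2*(‖α‖*(1/7)))^p := by
                  have : (0:ℝ) ≤ (2*u)^p := Real.rpow_nonneg (by linarith) p
                  linarith
            · calc (u + ‖α‖*(1/7))^p ≤ (2*u)^p :=
                  Real.rpow_le_rpow (by linarith) (by linarith) hp0.le
                _ ≤ (2*u)^p + (2*(‖α‖*(1/7)))^p := by
                  have : (0:ℝ) ≤ (2*(‖α‖*(1/7)))^p := Real.rpow_nonneg (by linarith) p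
                  linarith
          calc ENNReal.ofReal (‖∑' k, α k * ffK p k z‖ ^ p)
              ≤ ENNReal.ofReal ((u + ‖α‖*(1/7))^p) :=
                ENNReal.ofReal_le_ofReal (Real.rpow_le_rpow (norm_nonneg _) hF hp0.le)
            _ ≤ ENNReal.ofReal ((2*u)^p + (2*(‖α‖*(1/7)))^p) := ENNReal.ofReal_le_ofReal hsplit
            _ = ENNReal.ofReal ((2*u)^p) + ENNReal.ofReal ((2*(‖α‖*(1/7)))^p) :=
                ENNReal.ofReal_add (Real.rpow_nonneg (by linarith) p)
                  (Real.rpow_nonneg (by linarith) p)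
            _ = ENNReal.ofReal (((2*‖α‖) * (eeK p k₀ * ((aaK k₀ - r)^2)⁻¹)) ^ p)
                + ENNReal.ofReal ((2*(‖α‖*(1/7))) ^ p) := by
                congr 3
                rw [hu]; ring
        calc (∫⁻ r in Set.Ioo (0:ℝ) 1,
              ENNReal.ofReal (‖(∑' k, α k * ffK p k ((r:ℝ) * Complex.exp ((θ:ℂ) * Complex.I)))‖ ^ p))
            ≤ ∫⁻ r in Set.Ioo (0:ℝ) 1,
                (ENNReal.ofReal (((2*‖α‖) * (eeK p k₀ * ((aaK k₀ - r)^2)⁻¹)) ^ p)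
                  + ENNReal.ofReal ((2*(‖α‖*(1/7))) ^ p)) :=
              lintegral_mono_ae ((ae_restrict_mem measurableSet_Ioo).mono hpt2)
          _ = (∫⁻ r in Set.Ioo (0:ℝ) 1,
                ENNReal.ofReal (((2*‖α‖) * (eeK p k₀ * ((aaK k₀ - r)^2)⁻¹)) ^ p))
              + ∫⁻ _ in Set.Ioo (0:ℝ) 1, ENNReal.ofReal ((2*(‖α‖*(1/7))) ^ p) :=
              lintegral_add_left (by fun_prop) _
          _ ≤ ENNReal.ofReal ((2*‖α‖)^p) + ENNReal.ofReal ((2*(‖α‖*(1/7))) ^ p) := by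
              apply add_le_add
              · exact close_integral' p (aaK k₀) (eeK p k₀) hp (one_lt_aaK k₀) (eeK_eq p k₀)
                  (2*‖α‖) (by linarith)
              · rw [setLIntegral_const, Real.volume_Ioo,
                  show (1:ℝ)-0 = 1 by norm_num, ENNReal.ofReal_one, mul_one]
          _ ≤ ENNReal.ofReal ((4*‖α‖) ^ p) := by
              rw [← ENNReal.ofReal_add (Real.rpow_nonneg (by linarith) p)
                (Real.rpow_nonneg (by linarith) p)]
              apply ENNReal.ofReal_le_ofReal
              have h1 : (2*(‖α‖*(1/7)))^p ≤ (2*‖α‖)^p :=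
                Real.rpow_le_rpow (by linarith) (by linarith) hp0.le
              have h2 : (4*‖α‖:ℝ)^p = 2^p * (2*‖α‖)^p := by
                rw [← Real.mul_rpow (by norm_num) (by linarith)]
                congr 1
                ring
              have h3 : (2:ℝ) ≤ 2^p := by
                calc (2:ℝ) = 2^(1:ℝ) := (Real.rpow_one 2).symm
                  _ ≤ 2^p := Real.rpow_le_rpow_of_exponent_le (by norm_num) hp
              have h4 : (0:ℝ) ≤ (2*‖α‖)^p := Real.rpow_nonneg (by linarith) p
              nlinarith
      calc (∫⁻ r in Set.Ioo (0:ℝ) 1,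
            ENNReal.ofReal (‖(∑' k, α k * ffK p k ((r:ℝ) * Complex.exp ((θ:ℂ) * Complex.I)))‖ ^ p)) ^ (1/p)
          ≤ (ENNReal.ofReal ((4*‖α‖) ^ p)) ^ (1/p) :=
            ENNReal.rpow_le_rpow hupper (le_of_lt (one_div_pos.mpr hp0))
        _ = ENNReal.ofReal (4*‖α‖) := by
            rw [← ENNReal.ofReal_rpow_of_pos (show (0:ℝ) < 4*‖α‖ by linarith),
              ← ENNReal.rpow_mul, mul_one_div_cancel hp0.ne', ENNReal.rpow_one]
    rw [hrho]
    apply iSup_le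
    intro θ'
    rw [hradial]
    exact hupperAll (θ' : ℝ)
end
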